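/- A subset S of ℤ is realizable (i.e., S = {n ∈ ℤ | fⁿ is continuous} for some topological space X and bijection f : X → X) if and only if S is a submonoid of ℤ. -/

import Mathlib

theorem stmt_2 (S : Set ℤ) :
    (∃ (X : Type) (_ : TopologicalSpace X) (f : Equiv.Perm X),
      {n : ℤ | Continuous ⇑(f ^ n)} = S) ↔
    ((0 : ℤ) ∈ S ∧ ∀ a ∈ S, ∀ b ∈ S, a + b ∈ S) := by
  constructor
  · rintro ⟨X, t, f, rfl⟩
    refine ⟨by simpa using continuous_id, ?_⟩
    intro a ha b hb
    simp only [Set.mem_setOf_eq] at *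
    rw [zpow_add]
    simpa [Equiv.Perm.coe_mul] using ha.comp hb
  · rintro ⟨h0, hadd⟩
    let t : TopologicalSpace ℤ :=
      { IsOpen := fun U => U.Nonempty → S ⊆ U
        isOpen_univ := fun _ => Set.subset_univ _
        isOpen_inter := fun U V hU hV ⟨x, hxU, hxV⟩ =>
          Set.subset_inter (hU ⟨x, hxU⟩) (hV ⟨x, hxV⟩)
        isOpen_sUnion := fun 𝒮 h ⟨x, U, hU, hxU⟩ =>
          (h U hU ⟨x, hxU⟩).trans (Set.subset_sUnion_of_mem hU) }
    refine ⟨ℤ, t, Equiv.addRight 1, ?_⟩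
    ext n
    have hfn : ⇑(Equiv.addRight (1 : ℤ) ^ n) = fun x => x + n := by
      ext x
      simp
    simp only [Set.mem_setOf_eq, hfn]
    constructor
    · intro hc
      have hS : t.IsOpen S := fun _ => subset_rfl
      have hpre := (continuous_def.mp hc) S hS
      have hne : ((fun x => x + n) ⁻¹' S).Nonempty := ⟨-n, by simpa using h0⟩
      have := hpre hne h0
      simpa using this
    · intro hn
      rw [continuous_def]
      intro U hU ⟨x, hx⟩
      have hUne : U.Nonempty := ⟨x + n, hx⟩
      intro s hs
      exact hU hUne (hadd s hs n hn)
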